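/- Suppose for each s = 1,…,S the residual precisions τ_s are known. Then the exact Bayes Factor under the ES model factorizes as BF^ES(φ,ω) = ABF_single(𝒯²_ES, ζ; ω)·∏_s ABF_single(T_s², δ_s; φ), where T_s² = β̂_s² τ_s/δ_s², i.e. the approximation of Proposition 1 is exact when the error variances are known. -/

import Mathlib

open Real MeasureTheory Finset

/-- Density of `N(m, v)`. -/
noncomputable def gpdf (m v x : ℝ) : ℝ :=
  (Real.sqrt (2 * Real.pi * v))⁻¹ * Real.exp (-(x - m) ^ 2 / (2 * v))

/-- Likelihood of the data of one subgroup under the linear model with known precision. -/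
noncomputable def lik {n : ℕ} (y g : Fin n → ℝ) (tau mu beta : ℝ) : ℝ :=
  ∏ i, Real.sqrt (tau / (2 * Real.pi)) * Real.exp (-(tau / 2) * (y i - mu - beta * g i) ^ 2)

/-- Single-study approximate Bayes Factor. -/
noncomputable def ABFsingle (T2 delta phi : ℝ) : ℝ :=
  Real.sqrt (delta ^ 2 / (delta ^ 2 + phi ^ 2)) *
    Real.exp (T2 / 2 * (phi ^ 2 / (delta ^ 2 + phi ^ 2)))

lemma gauss_quad (a b c : ℝ) (ha : 0 < a) :
    ∫ x : ℝ, Real.exp (-(a * x ^ 2 + b * x + c)) =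
      Real.sqrt (π / a) * Real.exp (b ^ 2 / (4 * a) - c) := by
  have h : ∀ x : ℝ, -(a * x ^ 2 + b * x + c)
      = -a * (x + b / (2 * a)) ^ 2 + (b ^ 2 / (4 * a) - c) := by
    intro x; field_simp; ring
  simp_rw [h, Real.exp_add, integral_mul_const]
  rw [show (∫ x : ℝ, Real.exp (-a * (x + b / (2 * a)) ^ 2))
      = ∫ x : ℝ, Real.exp (-a * x ^ 2) from
    integral_add_right_eq_self (fun x => Real.exp (-a * x ^ 2)) _]
  rw [integral_gaussian]

lemma int_gpdf_exp (m v A B C : ℝ) (hv : 0 < v) (hA : 0 < A) :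
    ∫ x : ℝ, gpdf m v x * Real.exp (-(A * x ^ 2 + B * x + C))
      = (Real.sqrt (2 * π * v))⁻¹ * Real.sqrt (π / (A + 1 / (2 * v))) *
        Real.exp ((B - m / v) ^ 2 / (4 * (A + 1 / (2 * v))) - (C + m ^ 2 / (2 * v))) := by
  have h : ∀ x : ℝ, gpdf m v x * Real.exp (-(A * x ^ 2 + B * x + C))
      = (Real.sqrt (2 * π * v))⁻¹ *
        Real.exp (-((A + 1 / (2 * v)) * x ^ 2 + (B - m / v) * x + (C + m ^ 2 / (2 * v)))) := by
    intro x
    rw [gpdf, mul_assoc, ← Real.exp_add]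
    congr 1
    field_simp
    ring
  simp_rw [h]
  rw [integral_const_mul, gauss_quad _ _ _ (by positivity)]
  ring

lemma int_mu_lik (m : ℕ) (hm : 0 < m) (y g : Fin m → ℝ) (tau beta : ℝ) (ht : 0 < tau) :
    ∫ mu, lik y g tau mu beta
      = Real.sqrt (tau / (2 * π)) ^ m * Real.sqrt (π / (m * tau / 2)) *
        Real.exp (-((tau / 2 * ((∑ i, (g i) ^ 2) - (∑ i, g i) ^ 2 / m)) * beta ^ 2
          + (-(tau * ((∑ i, y i * g i) - (∑ i, y i) * (∑ i, g i) / m))) * beta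
          + tau / 2 * ((∑ i, (y i) ^ 2) - (∑ i, y i) ^ 2 / m))) := by
  have hm' : (m : ℝ) ≠ 0 := Nat.cast_ne_zero.2 hm.ne'
  have hlik : ∀ mu : ℝ, lik y g tau mu beta
      = Real.sqrt (tau / (2 * π)) ^ m *
        Real.exp (-((m * tau / 2) * mu ^ 2 + (-(tau * ∑ i, (y i - beta * g i))) * mu
          + tau / 2 * ∑ i, (y i - beta * g i) ^ 2)) := by
    intro mu
    rw [lik, Finset.prod_mul_distrib, Finset.prod_const, Finset.card_univ, Fintype.card_fin,
      ← Real.exp_sum]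
    congr 1
    have e : ∀ i, -(tau / 2) * (y i - mu - beta * g i) ^ 2
        = (tau * mu) * (y i - beta * g i) - (tau / 2) * ((y i - beta * g i) ^ 2)
          - tau / 2 * mu ^ 2 := by
      intro i; ring
    rw [Finset.sum_congr rfl (fun i _ => e i), Finset.sum_sub_distrib, Finset.sum_sub_distrib,
      ← Finset.mul_sum, ← Finset.mul_sum, Finset.sum_const, Finset.card_univ,
      Fintype.card_fin, nsmul_eq_mul]
    ring_nf
    simp only [sub_eq_neg_add]
  simp_rw [hlik]
  rw [integral_const_mul, gauss_quad _ _ _ (by positivity)]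
  have e1 : ∑ i, (y i - beta * g i) = (∑ i, y i) - beta * ∑ i, g i := by
    rw [Finset.sum_sub_distrib, Finset.mul_sum]
  have e2 : ∑ i, (y i - beta * g i) ^ 2
      = (∑ i, (y i) ^ 2) - 2 * beta * (∑ i, y i * g i) + beta ^ 2 * ∑ i, (g i) ^ 2 := by
    have e : ∀ i, (y i - beta * g i) ^ 2
        = (y i) ^ 2 - 2 * beta * (y i * g i) + beta ^ 2 * (g i) ^ 2 := fun i => by ring
    simp_rw [e, Finset.sum_add_distrib, Finset.sum_sub_distrib, ← Finset.mul_sum]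
  rw [e1, e2, ← mul_assoc]
  congr 1
  congr 1
  field_simp [hm', ht.ne']
  ring

lemma integral_gpdf_mul_const (mm v c : ℝ) (h : ℝ → ℝ) :
    ∫ x, gpdf mm v x * (c * h x) = c * ∫ x, gpdf mm v x * h x := by
  rw [← integral_const_mul]
  congr 1
  funext x
  ring

lemma sqrt_ratio (v A : ℝ) (hv : 0 < v) (hA : 0 < A) :
    (Real.sqrt (2 * π * v))⁻¹ * Real.sqrt (π / (A + 1 / (2 * v)))
      = Real.sqrt ((2 * v * A + 1)⁻¹) := by
  rw [← Real.sqrt_inv, ← Real.sqrt_mul (by positivity)]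
  congr 1
  have hpi : π ≠ 0 := pi_ne_zero
  field_simp

lemma per_s (m : ℕ) (hm : 0 < m) (y g : Fin m → ℝ) (tau phi : ℝ) (ht : 0 < tau) (hphi : 0 < phi)
    (d2 bet bh w T R C : ℝ)
    (hd : d2 = ((∑ i, (g i) ^ 2) - (∑ i, g i) ^ 2 / m)⁻¹)
    (hSxxpos : 0 < (∑ i, (g i) ^ 2) - (∑ i, g i) ^ 2 / m)
    (hbet : bet = ((∑ i, y i * g i) - (∑ i, y i) * (∑ i, g i) / m) * d2)
    (hbh : bh = bet * Real.sqrt tau)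
    (hw : w = (d2 + phi ^ 2)⁻¹)
    (hT : T = bet ^ 2 * tau / d2)
    (hR : R = tau / 2 * ((∑ i, (y i) ^ 2) - (∑ i, y i) ^ 2 / m)
        - T / 2 * (phi ^ 2 / (d2 + phi ^ 2)))
    (hC : C = Real.sqrt (tau / (2 * π)) ^ m * Real.sqrt (π / (m * tau / 2)) *
        Real.sqrt (d2 / (d2 + phi ^ 2))) (bbar : ℝ) :
    (∫ beta, gpdf (bbar / Real.sqrt tau) (phi ^ 2 / tau) beta * ∫ mu, lik y g tau mu beta)
      = C * Real.exp (-(w / 2 * bbar ^ 2 + -(w * bh) * bbar + R)) := by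
  have hst : 0 < Real.sqrt tau := Real.sqrt_pos.2 ht
  have hst2 : Real.sqrt tau ^ 2 = tau := Real.sq_sqrt ht.le
  have hApos : 0 < tau / 2 * ((∑ i, (g i) ^ 2) - (∑ i, g i) ^ 2 / m) :=
    mul_pos (by positivity) hSxxpos
  simp_rw [fun beta => int_mu_lik m hm y g tau beta ht]
  rw [integral_gpdf_mul_const, int_gpdf_exp _ _ _ _ _ (by positivity) hApos]
  set X := (∑ i, (g i) ^ 2) - (∑ i, g i) ^ 2 / (m : ℝ) with hX
  set U := (∑ i, y i * g i) - (∑ i, y i) * (∑ i, g i) / (m : ℝ) with hU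
  set V := (∑ i, (y i) ^ 2) - (∑ i, y i) ^ 2 / (m : ℝ) with hV
  have hXne : X ≠ 0 := hSxxpos.ne'
  have h1 : X⁻¹ + phi ^ 2 ≠ 0 :=
    (add_pos_of_nonneg_of_pos (inv_nonneg.2 hSxxpos.le) (by positivity)).ne'
  have e1 : (Real.sqrt (2 * π * (phi ^ 2 / tau)))⁻¹ *
      Real.sqrt (π / (tau / 2 * X + 1 / (2 * (phi ^ 2 / tau))))
      = Real.sqrt (d2 / (d2 + phi ^ 2)) := by
    rw [sqrt_ratio _ _ (by positivity) hApos]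
    congr 1
    rw [hd]
    field_simp
    ring
  have e2 : (-(tau * U) - (bbar / Real.sqrt tau) / (phi ^ 2 / tau)) ^ 2 /
        (4 * (tau / 2 * X + 1 / (2 * (phi ^ 2 / tau))))
      - (tau / 2 * V + (bbar / Real.sqrt tau) ^ 2 / (2 * (phi ^ 2 / tau)))
      = -(w / 2 * bbar ^ 2 + -(w * bh) * bbar + R) := by
    subst hd hbet hbh hw hT hR
    set st := Real.sqrt tau with hstd
    rw [← hst2]
    field_simp
    ring
  rw [e2, hC, ← e1]
  ring

lemma sum_quad {S : ℕ} (w b R : Fin S → ℝ) (bbar : ℝ) :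
    (∑ s, -(w s / 2 * bbar ^ 2 + -(w s * b s) * bbar + R s))
      = -((∑ s, w s) / 2 * bbar ^ 2 + -(∑ s, w s * b s) * bbar + ∑ s, R s) := by
  have e : ∀ s : Fin S, -(w s / 2 * bbar ^ 2 + -(w s * b s) * bbar + R s)
      = (-(bbar ^ 2 / 2)) * w s + bbar * (w s * b s) + (-1) * R s := fun s => by ring
  rw [Finset.sum_congr rfl (fun s _ => e s), Finset.sum_add_distrib, Finset.sum_add_distrib,
    ← Finset.mul_sum, ← Finset.mul_sum, ← Finset.mul_sum]
  ring

/-- When the residual precisions `τ_s` are known, the exact Bayes Factor of the ES model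
(with priors `b_s = β_s√τ_s ~ N(b̄, φ²)`, `b̄ ~ N(0, ω²)`, flat priors on the `μ_s`)
factorizes exactly as `ABF_single(𝒯²_ES, ζ; ω) · ∏_s ABF_single(T_s², δ_s; φ)`
with `T_s² = β̂_s² τ_s / δ_s²`: Proposition 1 is exact for known error variances. -/
theorem exact_bf_known_precisions_factorizes
    (S : ℕ) (hS : 1 ≤ S) (n : Fin S → ℕ)
    (y g : (s : Fin S) → Fin (n s) → ℝ)
    (tau : Fin S → ℝ) (htau : ∀ s, 0 < tau s)
    (phi omega : ℝ) (hphi : 0 < phi) (homega : 0 < omega)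
    -- summary statistics
    (gbar ybar delta2 betahat bhat w Ts2 : Fin S → ℝ)
    (hgbar : ∀ s, gbar s = (∑ i, g s i) / (n s))
    (hybar : ∀ s, ybar s = (∑ i, y s i) / (n s))
    (hdelta2 : ∀ s, delta2 s = ((∑ i, (g s i) ^ 2) - (n s) * (gbar s) ^ 2)⁻¹)
    (hgvar : ∀ s, 0 < (∑ i, (g s i) ^ 2) - (n s) * (gbar s) ^ 2)
    (hbetahat : ∀ s, betahat s = ((∑ i, y s i * g s i) - (n s) * ybar s * gbar s) * delta2 s)
    (hbhat : ∀ s, bhat s = betahat s * Real.sqrt (tau s))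
    (hw : ∀ s, w s = (delta2 s + phi ^ 2)⁻¹)
    (hTs2 : ∀ s, Ts2 s = (betahat s) ^ 2 * tau s / delta2 s)
    (zeta2 bbarhat T2ES : ℝ)
    (hzeta2 : zeta2 = (∑ s, w s)⁻¹)
    (hbbarhat : bbarhat = (∑ s, w s * bhat s) / (∑ s, w s))
    (hT2ES : T2ES = bbarhat ^ 2 / zeta2)
    -- marginal likelihoods (flat improper prior on each μ_s, known precisions)
    (Ma M0 : ℝ)
    (hMa : Ma = ∫ bbar, gpdf 0 (omega ^ 2) bbar *
      ∏ s, ∫ beta, gpdf (bbar / Real.sqrt (tau s)) (phi ^ 2 / tau s) beta *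
        ∫ mu, lik (y s) (g s) (tau s) mu beta)
    (hM0 : M0 = ∏ s, ∫ mu, lik (y s) (g s) (tau s) mu 0) :
    Ma / M0 =
      ABFsingle T2ES (Real.sqrt zeta2) omega *
        ∏ s, ABFsingle (Ts2 s) (Real.sqrt (delta2 s)) phi := by
  haveI : Nonempty (Fin S) := ⟨⟨0, hS⟩⟩
  have hpi := Real.pi_pos
  have hn : ∀ s, 0 < n s := by
    intro s
    rcases Nat.eq_zero_or_pos (n s) with h0 | h
    · exfalso
      have hg := hgvar s
      have : IsEmpty (Fin (n s)) := by rw [h0]; infer_instance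
      rw [Finset.univ_eq_empty] at hg
      simp [h0] at hg
    · exact h
  have hnn : ∀ s, ((n s : ℝ)) ≠ 0 := fun s => Nat.cast_ne_zero.2 (hn s).ne'
  have hsq : ∀ s, ((n s : ℝ)) * (gbar s) ^ 2 = (∑ i, g s i) ^ 2 / (n s) := by
    intro s; rw [hgbar s]; field_simp [hnn s]
  have hyg : ∀ s, ((n s : ℝ)) * ybar s * gbar s
      = (∑ i, y s i) * (∑ i, g s i) / (n s) := by
    intro s; rw [hybar s, hgbar s]; field_simp [hnn s]
  have hXpos : ∀ s, 0 < (∑ i, (g s i) ^ 2) - (∑ i, g s i) ^ 2 / (n s) := by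
    intro s; have h := hgvar s; rwa [hsq s] at h
  have hd : ∀ s, delta2 s = ((∑ i, (g s i) ^ 2) - (∑ i, g s i) ^ 2 / (n s))⁻¹ := by
    intro s; rw [hdelta2 s, hsq s]
  have hbet : ∀ s, betahat s
      = ((∑ i, y s i * g s i) - (∑ i, y s i) * (∑ i, g s i) / (n s)) * delta2 s := by
    intro s; rw [hbetahat s, hyg s]
  have hd2pos : ∀ s, 0 < delta2 s := fun s => (hd s) ▸ inv_pos.2 (hXpos s)
  have hwpos : ∀ s, 0 < w s :=
    fun s => (hw s) ▸ inv_pos.2 (add_pos (hd2pos s) (by positivity))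
  have hWpos : 0 < ∑ s, w s := Finset.sum_pos (fun s _ => hwpos s) Finset.univ_nonempty
  have hz2pos : 0 < zeta2 := hzeta2 ▸ inv_pos.2 hWpos
  -- Step 1: the inner double integral for each subgroup
  have key : ∀ (s : Fin S) (bbar : ℝ),
      (∫ beta, gpdf (bbar / Real.sqrt (tau s)) (phi ^ 2 / tau s) beta *
        ∫ mu, lik (y s) (g s) (tau s) mu beta)
      = (Real.sqrt (tau s / (2 * π)) ^ (n s) * Real.sqrt (π / (n s * tau s / 2)) *
          Real.sqrt (delta2 s / (delta2 s + phi ^ 2))) *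
        Real.exp (-(w s / 2 * bbar ^ 2 + -(w s * bhat s) * bbar +
          (tau s / 2 * ((∑ i, (y s i) ^ 2) - (∑ i, y s i) ^ 2 / (n s))
            - Ts2 s / 2 * (phi ^ 2 / (delta2 s + phi ^ 2))))) := by
    intro s bbar
    exact per_s (n s) (hn s) (y s) (g s) (tau s) phi (htau s) hphi
      (delta2 s) (betahat s) (bhat s) (w s) (Ts2 s) _ _
      (hd s) (hXpos s) (hbet s) (hbhat s) (hw s) (hTs2 s) rfl rfl bbar
  rw [hMa]
  simp_rw [key, Finset.prod_mul_distrib, ← Real.exp_sum, sum_quad]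
  rw [integral_gpdf_mul_const,
    int_gpdf_exp _ _ _ _ _ (by positivity) (div_pos hWpos two_pos)]
  rw [zero_div, sub_zero, show ((0 : ℝ) ^ 2 / (2 * omega ^ 2)) = 0 by norm_num, add_zero]
  -- Step 2: the null marginal likelihood
  have hM0' : M0 = ∏ s, (Real.sqrt (tau s / (2 * π)) ^ (n s) *
      Real.sqrt (π / (n s * tau s / 2)) *
      Real.exp (-(tau s / 2 * ((∑ i, (y s i) ^ 2) - (∑ i, y s i) ^ 2 / (n s))))) := by
    rw [hM0]
    refine Finset.prod_congr rfl fun s _ => ?_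
    rw [int_mu_lik (n s) (hn s) (y s) (g s) (tau s) 0 (htau s)]
    congr 2
    ring
  have hM0pos : 0 < M0 := by
    rw [hM0']
    refine Finset.prod_pos fun s _ => ?_
    have ht := htau s
    have hns : (0 : ℝ) < n s := Nat.cast_pos.2 (hn s)
    positivity
  rw [div_eq_iff hM0pos.ne', hM0']
  -- Step 3: rewrite the ABF factors
  have habfg : ABFsingle T2ES (Real.sqrt zeta2) omega
      = Real.sqrt (zeta2 / (zeta2 + omega ^ 2)) *
        Real.exp (T2ES / 2 * (omega ^ 2 / (zeta2 + omega ^ 2))) := by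
    rw [ABFsingle, Real.sq_sqrt hz2pos.le]
  have habfs : ∀ s, ABFsingle (Ts2 s) (Real.sqrt (delta2 s)) phi
      = Real.sqrt (delta2 s / (delta2 s + phi ^ 2)) *
        Real.exp (Ts2 s / 2 * (phi ^ 2 / (delta2 s + phi ^ 2))) := fun s => by
    rw [ABFsingle, Real.sq_sqrt (hd2pos s).le]
  rw [habfg]
  simp_rw [habfs]
  -- Step 4: global sqrt and exponent identities
  have eg1 : (Real.sqrt (2 * π * omega ^ 2))⁻¹ *
      Real.sqrt (π / ((∑ s, w s) / 2 + 1 / (2 * omega ^ 2)))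
      = Real.sqrt (zeta2 / (zeta2 + omega ^ 2)) := by
    rw [sqrt_ratio _ _ (by positivity) (div_pos hWpos two_pos)]
    congr 1
    rw [hzeta2]
    have h1 : (∑ s, w s)⁻¹ + omega ^ 2 ≠ 0 :=
      (add_pos (inv_pos.2 hWpos) (by positivity)).ne'
    field_simp
    ring
  have eg2 : (-(∑ s, w s * bhat s)) ^ 2 / (4 * ((∑ s, w s) / 2 + 1 / (2 * omega ^ 2)))
      = T2ES / 2 * (omega ^ 2 / (zeta2 + omega ^ 2)) := by
    rw [hT2ES, hbbarhat, hzeta2]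
    have h1 : (∑ s, w s)⁻¹ + omega ^ 2 ≠ 0 :=
      (add_pos (inv_pos.2 hWpos) (by positivity)).ne'
    have h2 : (∑ s, w s) ≠ 0 := hWpos.ne'
    field_simp
    ring
  rw [sub_eq_add_neg, Real.exp_add, eg2, ← Finset.sum_neg_distrib, Real.exp_sum]
  have es : ∀ s : Fin S, Real.exp (-(tau s / 2 * ((∑ i, (y s i) ^ 2)
        - (∑ i, y s i) ^ 2 / (n s)) - Ts2 s / 2 * (phi ^ 2 / (delta2 s + phi ^ 2))))
      = Real.exp (Ts2 s / 2 * (phi ^ 2 / (delta2 s + phi ^ 2))) *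
        Real.exp (-(tau s / 2 * ((∑ i, (y s i) ^ 2) - (∑ i, y s i) ^ 2 / (n s)))) :=
    fun s => by rw [← Real.exp_add]; congr 1; ring
  simp_rw [es, ← eg1]
  simp only [Finset.prod_mul_distrib]
  ring
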